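/- For every odd integer d ≥ 3, let φ_d : ℂ³ → ℂ³ be given by φ_d(x, y, z) = (I·(x − y)^d, (x + y)^d, z^d), and let φ̄_d(x, y, z) = (−I·(x − y)^d, (x + y)^d, z^d) (the map obtained by applying complex conjugation to the coefficients). Then there exists F ∈ GL₃(ℂ) such that for every v ∈ ℂ³ with v ≠ 0 there exists c ∈ ℂ with c ≠ 0 such that φ̄_d(v) = c • (F⁻¹·φ_d(F·v)). (That is, for every odd d the field of moduli of φ_d is ℚ.) -/

import Mathlib

open Matrix

noncomputable def phiD (d : ℕ) (v : Fin 3 → ℂ) : Fin 3 → ℂ :=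
  ![Complex.I * (v 0 - v 1) ^ d, (v 0 + v 1) ^ d, (v 2) ^ d]

noncomputable def phiDBar (d : ℕ) (v : Fin 3 → ℂ) : Fin 3 → ℂ :=
  ![-Complex.I * (v 0 - v 1) ^ d, (v 0 + v 1) ^ d, (v 2) ^ d]

theorem odd_degree_field_of_moduli_Q (d : ℕ) (hd : 3 ≤ d) (hodd : Odd d) :
    ∃ F : Matrix.GeneralLinearGroup (Fin 3) ℂ,
      ∀ v : Fin 3 → ℂ, v ≠ 0 → ∃ c : ℂ, c ≠ 0 ∧
        phiDBar d v =
          c • ((↑(F⁻¹) : Matrix (Fin 3) (Fin 3) ℂ).mulVec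
            (phiD d ((F : Matrix (Fin 3) (Fin 3) ℂ).mulVec v))) := by
  obtain ⟨n, hn⟩ : ∃ n : ℕ, d = n + 1 := ⟨d - 1, by omega⟩
  have hn0 : (n : ℂ) ≠ 0 := Nat.cast_ne_zero.mpr (by omega)
  have key : Complex.exp (-((Real.pi / 2 : ℝ) * Complex.I)) = -Complex.I := by
    rw [Complex.exp_neg, Complex.exp_mul_I, ← Complex.ofReal_cos, ← Complex.ofReal_sin,
      Real.cos_pi_div_two, Real.sin_pi_div_two]
    simp [Complex.inv_I]
  set c₀ : ℂ := Complex.exp (-((Real.pi / 2 : ℝ) * Complex.I) / n) with hc₀def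
  have hc₀ne : c₀ ≠ 0 := Complex.exp_ne_zero _
  have hpow : c₀ ^ n = -Complex.I := by
    rw [hc₀def, ← Complex.exp_nat_mul, mul_comm, div_mul_cancel₀ _ hn0, key]
  set A : Matrix (Fin 3) (Fin 3) ℂ := ![![0, -c₀, 0], ![c₀, 0, 0], ![0, 0, 1]] with hA
  set B : Matrix (Fin 3) (Fin 3) ℂ := ![![0, c₀⁻¹, 0], ![-c₀⁻¹, 0, 0], ![0, 0, 1]] with hB
  have hAB : A * B = 1 := by
    ext i j
    fin_cases i <;> fin_cases j <;> rw [Matrix.mul_apply] <;>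
      simp [hA, hB, Matrix.mul_apply, Fin.sum_univ_three, Matrix.one_apply,
        Matrix.vecHead, Matrix.vecTail, hc₀ne]
  have hBA : B * A = 1 := by
    ext i j
    fin_cases i <;> fin_cases j <;> rw [Matrix.mul_apply] <;>
      simp [hA, hB, Matrix.mul_apply, Fin.sum_univ_three, Matrix.one_apply,
        Matrix.vecHead, Matrix.vecTail, hc₀ne]
  refine ⟨⟨A, B, hAB, hBA⟩, ?_⟩
  intro v hv
  refine ⟨1, one_ne_zero, ?_⟩
  have hcoeA : ((⟨A, B, hAB, hBA⟩ : Matrix.GeneralLinearGroup (Fin 3) ℂ) :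
      Matrix (Fin 3) (Fin 3) ℂ) = A := rfl
  have hcoeB : ((↑((⟨A, B, hAB, hBA⟩ : Matrix.GeneralLinearGroup (Fin 3) ℂ)⁻¹)) :
      Matrix (Fin 3) (Fin 3) ℂ) = B := rfl
  rw [hcoeA, hcoeB, one_smul]
  have hId : c₀⁻¹ * c₀ ^ d = -Complex.I := by
    rw [hn, pow_succ, hpow, mul_comm (-Complex.I) c₀, ← mul_assoc,
      inv_mul_cancel₀ hc₀ne, one_mul]
  have hmv : A.mulVec v = ![-c₀ * v 1, c₀ * v 0, v 2] := by
    funext j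
    fin_cases j <;>
      simp [hA, Matrix.mulVec, dotProduct, Fin.sum_univ_three]
  rw [hmv]
  have hphi : phiD d ![-c₀ * v 1, c₀ * v 0, v 2] =
      ![Complex.I * (-c₀ * v 1 - c₀ * v 0) ^ d, (-c₀ * v 1 + c₀ * v 0) ^ d, v 2 ^ d] := by
    simp [phiD]
  rw [hphi]
  funext i
  fin_cases i <;>
    simp [phiDBar, hB, Matrix.mulVec, dotProduct, Fin.sum_univ_three,
      Matrix.vecHead, Matrix.vecTail]
  · -- -I (v0 - v1)^d = c₀⁻¹ * (-c₀ v1 + c₀ v0)^d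
    rw [show (-(c₀ * v 1) + c₀ * v 0) = c₀ * (v 0 - v 1) from by ring, mul_pow]
    linear_combination (-(v 0 - v 1) ^ d) * hId
  · -- (v0 + v1)^d = -c₀⁻¹ * (I * (-c₀ v1 - c₀ v0)^d)
    rw [show (-(c₀ * v 1) - c₀ * v 0) = -c₀ * (v 0 + v 1) from by ring, mul_pow,
      hodd.neg_pow c₀]
    linear_combination (-Complex.I * (v 0 + v 1) ^ d) * hId +
      (v 0 + v 1) ^ d * Complex.I_mul_I
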